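/- Let x ∈ S³ and v ∈ B⁴ (the open unit ball in ℝ⁴). Then F_v(B⁴_{√2}(x) ∩ S³) = B⁴_R(Q/|Q|) ∩ S³, where Q = (1−|v|²)x + 2⟨x,v⟩v and R = √(2(1 + 2⟨x,v⟩/|Q|)); that is, the conformal map F_v sends the open hemisphere of S³ centered at x to the spherical cap B⁴_R(Q/|Q|) ∩ S³. -/

import Mathlib

noncomputable section

open Metric
open scoped RealInnerProductSpace

/-- Euclidean four-space `ℝ⁴`. -/
abbrev E4 : Type := EuclideanSpace ℝ (Fin 4)

/-- The round unit three-sphere `S³ ⊆ ℝ⁴`. -/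
def S3 : Set E4 := Metric.sphere 0 1

/-- The conformal transformation `F_v(x) = ((1-|v|²)/|x-v|²)(x-v) - v` of `S³`,
for `v` in the open unit ball `B⁴`. -/
def confMap (v x : E4) : E4 := ((1 - ‖v‖ ^ 2) / ‖x - v‖ ^ 2) • (x - v) - v

lemma norm_sub_pos' (y v : E4) (hy : ‖y‖ = 1) (hv : ‖v‖ < 1) : 0 < ‖y - v‖ := by
  have h := norm_sub_norm_le y v
  rw [hy] at h; linarith

lemma norm_smul_sub_sq (c : ℝ) (a b : E4) :
    ‖c • a - b‖^2 = c^2*‖a‖^2 - 2*c*⟪a,b⟫ + ‖b‖^2 := by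
  rw [norm_sub_sq_real, real_inner_smul_left, norm_smul, mul_pow]
  rw [Real.norm_eq_abs, sq_abs]; ring

lemma norm_confMap (v y : E4) (hy : ‖y‖ = 1) (hv : ‖v‖ < 1) : ‖confMap v y‖ = 1 := by
  have hd := norm_sub_pos' y v hy hv
  have hd2 : ‖y - v‖^2 ≠ 0 := by positivity
  have hrel : ‖y - v‖^2 = 1 - 2*⟪y,v⟫ + ‖v‖^2 := by rw [norm_sub_sq_real, hy]; ring
  have hsq : ‖confMap v y‖^2 = 1 := by
    rw [confMap, norm_smul_sub_sq, inner_sub_left, real_inner_self_eq_norm_sq]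
    set t : ℝ := ⟪y,v⟫ with ht
    rw [hrel] at hd2 ⊢
    field_simp
    ring
  have h0 := norm_nonneg (confMap v y)
  nlinarith

lemma confMap_inv (v y : E4) (hy : ‖y‖ = 1) (hv : ‖v‖ < 1) :
    confMap (-v) (confMap v y) = y := by
  have hd := norm_sub_pos' y v hy hv
  have hd2 : ‖y - v‖^2 ≠ 0 := by positivity
  have hs : (0:ℝ) < 1 - ‖v‖^2 := by nlinarith [norm_nonneg v]
  rw [confMap, confMap, sub_neg_eq_add, sub_neg_eq_add, sub_add_cancel, norm_neg,
    norm_smul, mul_pow, smul_smul]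
  have hco : (1 - ‖v‖ ^ 2) / (‖(1 - ‖v‖ ^ 2) / ‖y - v‖ ^ 2‖ ^ 2 * ‖y - v‖ ^ 2)
      * ((1 - ‖v‖ ^ 2) / ‖y - v‖ ^ 2) = 1 := by
    rw [Real.norm_eq_abs, sq_abs]
    field_simp
  rw [hco, one_smul, sub_add_cancel]

lemma key_inner (x v y : E4) (hy : ‖y‖ = 1) (hv : ‖v‖ < 1) :
    ⟪confMap v y, (1 - ‖v‖ ^ 2) • x + (2 * ⟪x, v⟫) • v⟫ + 2 * ⟪x, v⟫
      = (1 - ‖v‖^2)^2 * ⟪y, x⟫ / ‖y - v‖^2 := by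
  have hd := norm_sub_pos' y v hy hv
  have hd2 : ‖y - v‖^2 ≠ 0 := by positivity
  have hrel : ‖y - v‖^2 = 1 - 2*⟪y,v⟫ + ‖v‖^2 := by rw [norm_sub_sq_real, hy]; ring
  rw [confMap]
  simp only [inner_sub_left, inner_add_right, real_inner_smul_left, real_inner_smul_right,
    real_inner_self_eq_norm_sq]
  rw [real_inner_comm v x]
  set a : ℝ := ⟪x,v⟫ with ha
  set t : ℝ := ⟪y,v⟫ with htt
  set u : ℝ := ⟪y,x⟫ with hu
  rw [hrel] at hd2 ⊢
  field_simp
  ring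

/-- Lemma B.4 of Marques–Neves:  for `x ∈ S³` and `v ∈ B⁴`, the conformal map `F_v`
sends the open hemisphere `B⁴_{√2}(x) ∩ S³` centered at `x` onto the spherical cap
`B⁴_R(Q/|Q|) ∩ S³`, where `Q = (1-|v|²)x + 2⟪x,v⟫v` and `R = √(2(1 + 2⟪x,v⟫/|Q|))`. -/
theorem confMap_image_of_hemisphere (x v : E4) (hx : x ∈ S3) (hv : ‖v‖ < 1) :
    confMap v '' (Metric.ball x (Real.sqrt 2) ∩ S3) =
      Metric.ball
        (‖(1 - ‖v‖ ^ 2) • x + (2 * ⟪x, v⟫) • v‖⁻¹ • ((1 - ‖v‖ ^ 2) • x + (2 * ⟪x, v⟫) • v))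
        (Real.sqrt (2 * (1 + 2 * ⟪x, v⟫ / ‖(1 - ‖v‖ ^ 2) • x + (2 * ⟪x, v⟫) • v‖))) ∩ S3 := by
  have hS3 : ∀ w : E4, w ∈ S3 ↔ ‖w‖ = 1 := fun w => by simp [S3]
  have hx1 : ‖x‖ = 1 := (hS3 x).mp hx
  have hs : (0:ℝ) < 1 - ‖v‖^2 := by nlinarith [norm_nonneg v]
  set a : ℝ := ⟪x, v⟫ with ha
  set Q : E4 := (1 - ‖v‖ ^ 2) • x + (2 * a) • v with hQdef
  have hQsq : ‖Q‖^2 = (1 - ‖v‖^2)^2 + 4*a^2 := by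
    rw [hQdef, norm_add_sq_real, norm_smul, norm_smul, real_inner_smul_left,
      real_inner_smul_right, Real.norm_eq_abs, Real.norm_eq_abs, mul_pow, mul_pow,
      sq_abs, sq_abs, hx1, ← ha]
    ring
  have hQpos : 0 < ‖Q‖ := by
    have h1 : 0 < ‖Q‖^2 := by rw [hQsq]; nlinarith [sq_nonneg a]
    nlinarith [norm_nonneg Q]
  have hKi : 0 < ‖Q‖⁻¹ := inv_pos.mpr hQpos
  have hhemi : ∀ y : E4, ‖y‖ = 1 → (dist y x < Real.sqrt 2 ↔ 0 < ⟪y, x⟫) := by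
    intro y hy
    rw [dist_eq_norm, Real.lt_sqrt (norm_nonneg _), norm_sub_sq_real, hy, hx1]
    constructor <;> intro h <;> nlinarith
  have hcap : ∀ z : E4, ‖z‖ = 1 →
      (dist z (‖Q‖⁻¹ • Q) < Real.sqrt (2 * (1 + 2 * a / ‖Q‖)) ↔ -(2*a) < ⟪z, Q⟫) := by
    intro z hz
    rw [dist_eq_norm, Real.lt_sqrt (norm_nonneg _), norm_sub_sq_real, real_inner_smul_right,
      norm_smul, Real.norm_eq_abs, abs_of_nonneg (inv_nonneg.mpr (norm_nonneg Q)),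
      inv_mul_cancel₀ hQpos.ne', hz, div_eq_mul_inv]
    constructor <;> intro h
    · have h2 : (-(2*a)) * ‖Q‖⁻¹ < ⟪z,Q⟫ * ‖Q‖⁻¹ := by nlinarith
      exact (mul_lt_mul_iff_of_pos_right hKi).mp h2
    · have h2 := (mul_lt_mul_iff_of_pos_right hKi).mpr h
      nlinarith
  ext z
  simp only [Set.mem_image, Set.mem_inter_iff, mem_ball, hS3]
  constructor
  · rintro ⟨y, ⟨hyb, hy1⟩, rfl⟩
    have hz1 : ‖confMap v y‖ = 1 := norm_confMap v y hy1 hv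
    refine ⟨(hcap _ hz1).mpr ?_, hz1⟩
    have hk := key_inner x v y hy1 hv
    rw [← ha, ← hQdef] at hk
    have hu : 0 < ⟪y, x⟫ := (hhemi y hy1).mp hyb
    have hdp := norm_sub_pos' y v hy1 hv
    have hpos : 0 < (1 - ‖v‖^2)^2 * ⟪y,x⟫ / ‖y - v‖^2 :=
      div_pos (mul_pos (pow_pos hs 2) hu) (by positivity)
    linarith [hk]
  · rintro ⟨hzb, hz1⟩
    have hv' : ‖-v‖ < 1 := by simpa using hv
    have hy1 : ‖confMap (-v) z‖ = 1 := norm_confMap (-v) z hz1 hv'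
    have hfy : confMap v (confMap (-v) z) = z := by
      have h := confMap_inv (-v) z hz1 hv'
      simpa using h
    refine ⟨confMap (-v) z, ⟨?_, hy1⟩, hfy⟩
    rw [hhemi _ hy1]
    have hk := key_inner x v (confMap (-v) z) hy1 hv
    rw [← ha, ← hQdef, hfy] at hk
    have h0 : -(2*a) < ⟪z, Q⟫ := (hcap z hz1).mp hzb
    have hdp := norm_sub_pos' (confMap (-v) z) v hy1 hv
    have hpos : 0 < (1 - ‖v‖^2)^2 * ⟪confMap (-v) z, x⟫ / ‖confMap (-v) z - v‖^2 := by
      rw [← hk]; linarith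
    rcases (div_pos_iff).mp hpos with ⟨h1, h2⟩ | ⟨h1, h2⟩
    · nlinarith [mul_pos hs hs]
    · exfalso; nlinarith
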